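/- Let X = (P,Q,R) with P = Ay+Bz, Q = -Ax+Cz, R = -Bx-Cy where A = x²+y², B = y²+xy, C = -x²-xy. Then X is a homogeneous cubic vector field tangent to the unit sphere, the plane {z=0} is invariant (z divides R), and X has no singular point on the great circle {z=0}∩{x²+y²=1}; hence this great circle is a periodic orbit of X. -/
import Mathlib


open MvPolynomial

theorem stmt_12 (A B C P Q R : MvPolynomial (Fin 3) ℝ)
    (hA : A = (X 0) ^ 2 + (X 1) ^ 2) (hB : B = (X 1) ^ 2 + X 0 * X 1)
    (hC : C = -(X 0) ^ 2 - X 0 * X 1)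
    (hP : P = A * X 1 + B * X 2) (hQ : Q = -A * X 0 + C * X 2)
    (hR : R = -B * X 0 - C * X 1) :
    P * X 0 + Q * X 1 + R * X 2 = 0 ∧
    (X 2 : MvPolynomial (Fin 3) ℝ) ∣ R ∧
    ∀ x y : ℝ, x ^ 2 + y ^ 2 = 1 →
      ¬ (eval ![x, y, 0] P = 0 ∧ eval ![x, y, 0] Q = 0 ∧ eval ![x, y, 0] R = 0) := by
  subst hA hB hC hP hQ hR
  refine ⟨by ring, ⟨0, by ring⟩, ?_⟩
  intro x y h ⟨h1, h2, _⟩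
  simp [Matrix.cons_val_zero, Matrix.cons_val_one] at h1 h2
  rcases h1 with h1 | h1 <;> rcases h2 with h2 | h2 <;> nlinarith [sq_nonneg x, sq_nonneg y]
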